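/- Theorem 3 (Poisson sampling, strict inequality): Suppose the sampling indicators I_1,…,I_N are mutually independent (Poisson sampling), that a ≤ 1/(K+1), and that there exist k ≠ l in U₂ with (π_k − a) y_k ≠ (π_l − a) y_l. Then E[(t̂_IHT − t_y)²] < E[(t̂_HT − t_y)²]. -/

import Mathlib

open MeasureTheory

lemma mse_formula {Ω : Type*} [MeasurableSpace Ω] (μ : Measure Ω) [IsProbabilityMeasure μ]
    (N : ℕ) (I : Fin N → Ω → ℝ)
    (hI01 : ∀ k, ∀ ω, I k ω = 0 ∨ I k ω = 1)
    (hImeas : ∀ k, Measurable (I k))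
    (hIindep : ProbabilityTheory.iIndepFun I μ)
    (π : Fin N → ℝ) (hπ : ∀ k, π k = ∫ ω, I k ω ∂μ)
    (w : Fin N → ℝ) (t : ℝ) :
    ∫ ω, ((∑ k, I k ω * w k) - t) ^ 2 ∂μ
      = (∑ k, w k ^ 2 * (π k * (1 - π k))) + ((∑ k, π k * w k) - t) ^ 2 := by
  have hint : ∀ k, Integrable (I k) μ := fun k =>
    ⟨(hImeas k).aestronglyMeasurable, HasFiniteIntegral.of_bounded (C := 1)
      (ae_of_all _ fun ω => by rcases hI01 k ω with h | h <;> simp [h])⟩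
  have hint2 : ∀ k l, Integrable (fun ω => I k ω * I l ω) μ := fun k l =>
    ⟨((hImeas k).mul (hImeas l)).aestronglyMeasurable, HasFiniteIntegral.of_bounded (C := 1)
      (ae_of_all _ fun ω => by
        rcases hI01 k ω with h | h <;> rcases hI01 l ω with h' | h' <;> simp [h, h'])⟩
  have hEII : ∀ k l, ∫ ω, I k ω * I l ω ∂μ
      = π k * π l + (if k = l then π k * (1 - π k) else 0) := by
    intro k l
    rcases eq_or_ne k l with rfl | hkl
    · have h1 : ∀ ω, I k ω * I k ω = I k ω := fun ω => by
        rcases hI01 k ω with h | h <;> simp [h]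
      simp only [h1, if_pos rfl, if_true]
      rw [← hπ]; ring
    · have h := ProbabilityTheory.IndepFun.integral_mul_eq_mul_integral (hIindep.indepFun hkl) (hint k).1 (hint l).1
      have e : (fun ω => I k ω * I l ω) = I k * I l := rfl
      rw [if_neg hkl, add_zero]
      calc ∫ ω, I k ω * I l ω ∂μ = integral μ (I k * I l) := by rw [e]
        _ = integral μ (I k) * integral μ (I l) := h
        _ = π k * π l := by rw [hπ k, hπ l]
  have hS2 : ∀ ω, ((∑ k, I k ω * w k) - t) ^ 2
      = (∑ k : Fin N, ∑ l : Fin N, (I k ω * I l ω) * (w k * w l))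
        - (2 * t) * (∑ k, I k ω * w k) + t ^ 2 := by
    intro ω
    have h : (∑ k, I k ω * w k) ^ 2
        = ∑ k : Fin N, ∑ l : Fin N, (I k ω * I l ω) * (w k * w l) := by
      rw [sq, Finset.sum_mul_sum]
      exact Finset.sum_congr rfl fun k _ => Finset.sum_congr rfl fun l _ => by ring
    rw [sub_sq, h]; ring
  have hintD : Integrable (fun ω => ∑ k : Fin N, ∑ l : Fin N, (I k ω * I l ω) * (w k * w l)) μ :=
    integrable_finset_sum _ fun k _ => integrable_finset_sum _ fun l _ => (hint2 k l).mul_const _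
  have hintS : Integrable (fun ω => ∑ k, I k ω * w k) μ :=
    integrable_finset_sum _ fun k _ => (hint k).mul_const _
  have hint3 : Integrable (fun ω => (∑ k : Fin N, ∑ l : Fin N, I k ω * I l ω * (w k * w l))
      - 2 * t * ∑ k, I k ω * w k) μ := hintD.sub (hintS.const_mul _)
  have hint4 : Integrable (fun ω => 2 * t * ∑ k, I k ω * w k) μ := hintS.const_mul _
  simp_rw [hS2]
  rw [integral_add hint3 (integrable_const _),
    integral_sub hintD hint4, integral_const_mul, integral_const, probReal_univ]
  rw [integral_finset_sum _ fun k _ => integrable_finset_sum _ fun l _ => (hint2 k l).mul_const _]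
  have h1 : ∀ k : Fin N, ∫ ω, ∑ l : Fin N, (I k ω * I l ω) * (w k * w l) ∂μ
      = ∑ l : Fin N, (π k * π l + (if k = l then π k * (1 - π k) else 0)) * (w k * w l) := by
    intro k
    rw [integral_finset_sum _ fun l _ => (hint2 k l).mul_const _]
    exact Finset.sum_congr rfl fun l _ => by rw [integral_mul_const, hEII]
  simp_rw [h1]
  rw [integral_finset_sum _ fun k _ => (hint k).mul_const _]
  have h2 : ∀ k, ∫ ω, I k ω * w k ∂μ = π k * w k := fun k => by
    rw [integral_mul_const, ← hπ]
  simp_rw [h2, add_mul, Finset.sum_add_distrib, ite_mul, zero_mul, Finset.sum_ite_eq,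
    Finset.mem_univ, if_pos]
  have h3 : ∑ k : Fin N, ∑ l : Fin N, π k * π l * (w k * w l)
      = (∑ k, π k * w k) ^ 2 := by
    rw [sq, Finset.sum_mul_sum]
    exact Finset.sum_congr rfl fun k _ => Finset.sum_congr rfl fun l _ => by ring
  rw [h3]
  have h4 : ∀ k, π k * (1 - π k) * (w k * w k) = w k ^ 2 * (π k * (1 - π k)) := fun k => by ring
  simp_rw [h4]
  simp only [ENNReal.toReal_one, one_smul]
  ring


/-- Theorem 3 (Poisson sampling, strict inequality): under mutually independent sampling
indicators, `a ≤ 1/(K+1)`, and the existence of `k ≠ l` in `U₂` with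
`(π_k − a) y_k ≠ (π_l − a) y_l`, the IHT estimator has strictly smaller MSE. -/
theorem iht_lt_ht_poisson
    {Ω : Type*} [MeasurableSpace Ω] (μ : Measure Ω) [IsProbabilityMeasure μ]
    (N : ℕ) (y : Fin N → ℝ) (I : Fin N → Ω → ℝ)
    (hI01 : ∀ k, ∀ ω, I k ω = 0 ∨ I k ω = 1)
    (hImeas : ∀ k, Measurable (I k))
    (hIindep : ProbabilityTheory.iIndepFun I μ)
    (π : Fin N → ℝ)
    (hπ : ∀ k, π k = ∫ ω, I k ω ∂μ)
    (hπmem : ∀ k, π k ∈ Set.Ioc (0 : ℝ) 1)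
    (a : ℝ) (ha : a ∈ Set.Ioc (0 : ℝ) 1)
    (U2 : Finset (Fin N)) (K : ℕ) (hK : U2.card = K)
    (hU2 : ∀ k ∈ U2, π k ≤ a)
    (haK : a ≤ 1 / ((K : ℝ) + 1))
    (hstrict : ∃ k ∈ U2, ∃ l ∈ U2, k ≠ l ∧ (π k - a) * y k ≠ (π l - a) * y l)
    (πs : Fin N → ℝ)
    (hπs : ∀ k, πs k = if k ∈ U2 then a else π k) :
    (∫ ω, ((∑ k, I k ω * y k / πs k) - ∑ k, y k) ^ 2 ∂μ)
      < ∫ ω, ((∑ k, I k ω * y k / π k) - ∑ k, y k) ^ 2 ∂μ := by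
  obtain ⟨ha0, ha1⟩ := ha
  have hπ0 : ∀ k, 0 < π k := fun k => (hπmem k).1
  have hπ1 : ∀ k, π k ≤ 1 := fun k => (hπmem k).2
  have haK' : a * ((K : ℝ) + 1) ≤ 1 := by
    rw [← le_div_iff₀ (by positivity)] ; exact haK
  set c : Fin N → ℝ := fun k => (π k - a) * y k with hc
  set D : Fin N → ℝ := fun k => y k ^ 2 * ((1 - π k) * (a ^ 2 - π k ^ 2)) / (π k * a ^ 2)
    with hD
  -- rewrite both MSEs via the formula
  have hIHT := mse_formula μ N I hI01 hImeas hIindep π hπ (fun k => y k / πs k) (∑ k, y k)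
  have hHT := mse_formula μ N I hI01 hImeas hIindep π hπ (fun k => y k / π k) (∑ k, y k)
  simp_rw [mul_div_assoc]
  rw [hIHT, hHT]
  -- HT is unbiased
  have hbias2 : (∑ k, π k * (y k / π k)) - ∑ k, y k = 0 := by
    have h : ∀ k : Fin N, π k * (y k / π k) = y k := fun k => by
      rw [mul_div_assoc', mul_div_cancel_left₀ _ (hπ0 k).ne']
    simp_rw [h, sub_self]
  rw [hbias2]
  -- bias of IHT
  have hbias : (∑ k, π k * (y k / πs k)) - ∑ k, y k = (∑ k ∈ U2, c k) / a := by
    rw [← Finset.sum_sub_distrib]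
    have h : ∀ k : Fin N, π k * (y k / πs k) - y k = if k ∈ U2 then c k / a else 0 := by
      intro k
      rw [hπs k]
      by_cases hk : k ∈ U2
      · simp only [hk, if_true, hc]
        field_simp
      · simp only [hk, if_false]
        rw [mul_div_assoc', mul_div_cancel_left₀ _ (hπ0 k).ne', sub_self]
    simp_rw [h]
    rw [Finset.sum_ite_mem, Finset.univ_inter, Finset.sum_div]
  rw [hbias]
  -- variance difference
  have hdiff : (∑ k, (y k / π k) ^ 2 * (π k * (1 - π k)))
      - (∑ k, (y k / πs k) ^ 2 * (π k * (1 - π k))) = ∑ k ∈ U2, D k := by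
    rw [← Finset.sum_sub_distrib]
    have h : ∀ k : Fin N, (y k / π k) ^ 2 * (π k * (1 - π k))
        - (y k / πs k) ^ 2 * (π k * (1 - π k)) = if k ∈ U2 then D k else 0 := by
      intro k
      rw [hπs k]
      by_cases hk : k ∈ U2
      · simp only [hk, if_true, hD]
        have h1 : π k ≠ 0 := (hπ0 k).ne'
        have h2 : a ≠ 0 := ha0.ne'
        field_simp
      · simp only [hk, if_false, sub_self]
    simp_rw [h]
    rw [Finset.sum_ite_mem, Finset.univ_inter]
  -- strict Cauchy-Schwarz
  have hCS : (∑ k ∈ U2, c k) ^ 2 < (K : ℝ) * ∑ k ∈ U2, c k ^ 2 := by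
    have hid : ∑ k ∈ U2, ∑ l ∈ U2, (c k - c l) ^ 2
        = 2 * ((K : ℝ) * (∑ k ∈ U2, c k ^ 2) - (∑ k ∈ U2, c k) ^ 2) := by
      have h1 : ∀ k ∈ U2, ∑ l ∈ U2, (c k - c l) ^ 2
          = (K : ℝ) * c k ^ 2 - 2 * c k * (∑ l ∈ U2, c l) + ∑ l ∈ U2, c l ^ 2 := by
        intro k _
        rw [Finset.sum_congr rfl fun l _ => sub_sq (c k) (c l), Finset.sum_add_distrib,
          Finset.sum_sub_distrib, Finset.sum_const, hK, nsmul_eq_mul, ← Finset.mul_sum]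
      rw [Finset.sum_congr rfl h1, Finset.sum_add_distrib, Finset.sum_sub_distrib,
        ← Finset.mul_sum, ← Finset.sum_mul, Finset.sum_const, hK, nsmul_eq_mul]
      rw [show ∑ i ∈ U2, 2 * c i = 2 * ∑ i ∈ U2, c i from by rw [Finset.mul_sum]]
      ring
    obtain ⟨k0, hk0, l0, hl0, hkl0, hne⟩ := hstrict
    have h1 : (0 : ℝ) < (c k0 - c l0) ^ 2 :=
      pow_two_pos_of_ne_zero (sub_ne_zero.2 hne)
    have h2 : (c k0 - c l0) ^ 2 ≤ ∑ l ∈ U2, (c k0 - c l) ^ 2 :=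
      Finset.single_le_sum (f := fun l => (c k0 - c l) ^ 2) (fun l _ => sq_nonneg _) hl0
    have h3 : ∑ l ∈ U2, (c k0 - c l) ^ 2 ≤ ∑ k ∈ U2, ∑ l ∈ U2, (c k - c l) ^ 2 :=
      Finset.single_le_sum (f := fun k => ∑ l ∈ U2, (c k - c l) ^ 2)
        (fun k _ => Finset.sum_nonneg fun l _ => sq_nonneg _) hk0
    nlinarith [hid]
  -- termwise bound
  have hterm : ∀ k ∈ U2, (K : ℝ) * c k ^ 2 / a ^ 2 ≤ D k := by
    intro k hk
    have hp0 := hπ0 k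
    have hp1 := hπ1 k
    have hpa := hU2 k hk
    have hKnn : (0 : ℝ) ≤ (K : ℝ) := Nat.cast_nonneg K
    have key : (K : ℝ) * ((a - π k) ^ 2 * π k) ≤ (1 - π k) * (a ^ 2 - π k ^ 2) := by
      nlinarith [mul_nonneg (mul_nonneg (sub_nonneg.2 hpa) hp0.le)
          (by nlinarith : (0:ℝ) ≤ 1 - a - (K : ℝ) * a),
        sq_nonneg (a - π k), mul_nonneg (mul_nonneg ha0.le hp0.le) (sub_nonneg.2 hp1),
        mul_nonneg (sub_nonneg.2 hpa) (sub_nonneg.2 hpa)]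
    show (K : ℝ) * c k ^ 2 / a ^ 2
        ≤ y k ^ 2 * ((1 - π k) * (a ^ 2 - π k ^ 2)) / (π k * a ^ 2)
    rw [div_le_div_iff₀ (by positivity) (by positivity)]
    have h := mul_le_mul_of_nonneg_left key (show (0:ℝ) ≤ y k ^ 2 * a ^ 2 by positivity)
    have e1 : (K : ℝ) * c k ^ 2 * (π k * a ^ 2)
        = y k ^ 2 * a ^ 2 * ((K : ℝ) * ((a - π k) ^ 2 * π k)) := by
      rw [show c k = (π k - a) * y k from rfl]; ring
    have e2 : y k ^ 2 * ((1 - π k) * (a ^ 2 - π k ^ 2)) * a ^ 2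
        = y k ^ 2 * a ^ 2 * ((1 - π k) * (a ^ 2 - π k ^ 2)) := by ring
    rw [e1, e2]
    exact h
  have hsum : (K : ℝ) * (∑ k ∈ U2, c k ^ 2) / a ^ 2 ≤ ∑ k ∈ U2, D k := by
    rw [Finset.mul_sum, Finset.sum_div]
    exact Finset.sum_le_sum hterm
  have hfin : ((∑ k ∈ U2, c k) / a) ^ 2 < ∑ k ∈ U2, D k := by
    rw [div_pow]
    calc (∑ k ∈ U2, c k) ^ 2 / a ^ 2 < (K : ℝ) * (∑ k ∈ U2, c k ^ 2) / a ^ 2 :=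
          (div_lt_div_iff_of_pos_right (by positivity)).2 hCS
      _ ≤ ∑ k ∈ U2, D k := hsum
  norm_num
  linarith [hfin, hdiff]
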